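/- arXiv:0911.0618 — 2 statements merged into one kernel-verified Lean document; each statement's English description precedes it below -/
import Mathlib

section
/- Vanishing of regular δ̂-closed 2-increments: let T > 0 and μ > 1. If q : S_T² → L^p(ℝ^n) is continuous, satisfies q_{ts} = q_{tu} + S_{t−u}(q_{us}) for all 0 ≤ s ≤ u ≤ t ≤ T, and ‖q_{ts}‖_{L^p} ≤ C (t−s)^μ for all s ≤ t and some constant C, then q_{ts} = 0 for all 0 ≤ s ≤ t ≤ T. -/
open MeasureTheory Real
open scoped ENNReal

/-- The heat kernel on ℝ^n: `g_t(ξ) = (2πt)^(-n/2) exp(-|ξ|²/(2t))`. -/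
noncomputable def heatKernel (n : ℕ) (t : ℝ) : EuclideanSpace ℝ (Fin n) → ℝ :=
  fun ξ => (2 * π * t) ^ (-(n : ℝ) / 2) * Real.exp (-‖ξ‖ ^ 2 / (2 * t))

/-- Convolution of two real functions on ℝ^n. -/
noncomputable def convol {n : ℕ} (f g : EuclideanSpace ℝ (Fin n) → ℝ) :
    EuclideanSpace ℝ (Fin n) → ℝ :=
  fun ξ => ∫ η, f η * g (ξ - η)

/-- The Lebesgue space `L^p(ℝ^n)`. -/
abbrev LpR (n : ℕ) (p : ℝ) : Type :=
  Lp ℝ (ENNReal.ofReal p) (volume : Measure (EuclideanSpace ℝ (Fin n)))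

lemma heatKernel_pos (n : ℕ) {t : ℝ} (ht : 0 < t) (ξ : EuclideanSpace ℝ (Fin n)) :
    0 < heatKernel n t ξ :=
  mul_pos (Real.rpow_pos_of_pos (by positivity) _) (Real.exp_pos _)

lemma heatKernel_continuous (n : ℕ) (t : ℝ) : Continuous (heatKernel n t) := by
  unfold heatKernel
  fun_prop

lemma heatKernel_eq_prod (n : ℕ) {t : ℝ} (ht : 0 < t) (ξ : EuclideanSpace ℝ (Fin n)) :
    heatKernel n t ξ = (2 * π * t) ^ (-(n : ℝ) / 2) *
      ∏ i, Real.exp (-((2*t)⁻¹) * (ξ i) ^ 2) := by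
  unfold heatKernel
  rw [← Real.exp_sum]
  congr 2
  have hnorm : ‖ξ‖ ^ 2 = ∑ i, (ξ i) ^ 2 := by
    rw [EuclideanSpace.norm_eq, Real.sq_sqrt (by positivity)]
    exact Finset.sum_congr rfl fun i _ => by rw [Real.norm_eq_abs, sq_abs]
  rw [hnorm, neg_div, Finset.sum_div, ← Finset.sum_neg_distrib]
  exact Finset.sum_congr rfl fun i _ => by field_simp

lemma integrable_heatKernel (n : ℕ) {t : ℝ} (ht : 0 < t) :
    Integrable (heatKernel n t) := by
  have hb : (0:ℝ) < (2*t)⁻¹ := by positivity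
  have hint : Integrable (fun x : Fin n → ℝ => ∏ i, Real.exp (-((2*t)⁻¹) * (x i) ^ 2)) :=
    Integrable.fintype_prod fun _ => integrable_exp_neg_mul_sq hb
  have hmp := EuclideanSpace.volume_preserving_symm_measurableEquiv_toLp (Fin n)
  have := (hmp.integrable_comp_emb (MeasurableEquiv.toLp 2 (Fin n → ℝ)).symm.measurableEmbedding).2 hint
  have h2 : Integrable (fun ξ : EuclideanSpace ℝ (Fin n) =>
      ∏ i, Real.exp (-((2*t)⁻¹) * (ξ i) ^ 2)) := this
  have := h2.const_mul ((2 * π * t) ^ (-(n : ℝ) / 2))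
  exact this.congr (Filter.Eventually.of_forall fun ξ => (heatKernel_eq_prod n ht ξ).symm)

lemma integral_heatKernel (n : ℕ) {t : ℝ} (ht : 0 < t) :
    ∫ ξ, heatKernel n t ξ = 1 := by
  have hb : (0:ℝ) < (2*t)⁻¹ := by positivity
  have hmp := EuclideanSpace.volume_preserving_symm_measurableEquiv_toLp (Fin n)
  have h1 : ∫ ξ : EuclideanSpace ℝ (Fin n), ∏ i, Real.exp (-((2*t)⁻¹) * (ξ i) ^ 2)
      = ∫ x : Fin n → ℝ, ∏ i, Real.exp (-((2*t)⁻¹) * (x i) ^ 2) :=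
    hmp.integral_comp (MeasurableEquiv.toLp 2 (Fin n → ℝ)).symm.measurableEmbedding
      (fun x : Fin n → ℝ => ∏ i, Real.exp (-((2*t)⁻¹) * (x i) ^ 2))
  have h2 : ∫ x : Fin n → ℝ, ∏ i, Real.exp (-((2*t)⁻¹) * (x i) ^ 2)
      = (∫ x : ℝ, Real.exp (-((2*t)⁻¹) * x ^ 2)) ^ n := by
    rw [volume_pi, integral_fintype_prod_eq_pow (ι := Fin n) (fun x : ℝ => Real.exp (-((2*t)⁻¹) * x ^ 2))]
    simp
  have h3 : ∫ x : ℝ, Real.exp (-((2*t)⁻¹) * x ^ 2) = Real.sqrt (2 * π * t) := by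
    rw [integral_gaussian]
    congr 1
    field_simp
  calc ∫ ξ, heatKernel n t ξ
      = (2 * π * t) ^ (-(n : ℝ) / 2) * ∫ ξ : EuclideanSpace ℝ (Fin n),
          ∏ i, Real.exp (-((2*t)⁻¹) * (ξ i) ^ 2) := by
        rw [← integral_const_mul]
        exact integral_congr_ae (Filter.Eventually.of_forall fun ξ => heatKernel_eq_prod n ht ξ)
    _ = (2 * π * t) ^ (-(n : ℝ) / 2) * Real.sqrt (2 * π * t) ^ n := by rw [h1, h2, h3]
    _ = 1 := by
        have h2πt : (0:ℝ) < 2 * π * t := by positivity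
        rw [Real.sqrt_eq_rpow, ← Real.rpow_natCast ((2*π*t) ^ ((1:ℝ)/2)) n,
          ← Real.rpow_mul h2πt.le, ← Real.rpow_add h2πt]
        rw [show (-(n:ℝ)/2 + 1/2*(n:ℝ)) = 0 by ring, Real.rpow_zero]

lemma lintegral_heatKernel (n : ℕ) {t : ℝ} (ht : 0 < t) :
    ∫⁻ ξ, ENNReal.ofReal (heatKernel n t ξ) = 1 := by
  rw [← ofReal_integral_eq_lintegral_ofReal (integrable_heatKernel n ht)
    (Filter.Eventually.of_forall fun ξ => (heatKernel_pos n ht ξ).le),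
    integral_heatKernel n ht, ENNReal.ofReal_one]

/-- Jensen-type step: for the probability density `G` and `p ≥ 1`,
`(∫⁻ G·F)^p ≤ ∫⁻ G·F^p`. -/
lemma jensen_step {α : Type*} [MeasurableSpace α] {μ : Measure α} {p : ℝ} (hp : 1 ≤ p)
    {G F : α → ℝ≥0∞} (hG : Measurable G) (hF : Measurable F)
    (hG0 : ∀ x, G x ≠ 0) (hGtop : ∀ x, G x ≠ ∞) (hGint : ∫⁻ x, G x ∂μ = 1) :
    (∫⁻ x, G x * F x ∂μ) ^ p ≤ ∫⁻ x, G x * F x ^ p ∂μ := by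
  rcases eq_or_lt_of_le hp with hp1 | hp1
  · simp [← hp1]
  · set q : ℝ := p / (p - 1) with hq
    have hpq : p.HolderConjugate q := Real.HolderConjugate.conjExponent hp1
    have hp0 : (0:ℝ) < p := by linarith
    have key : ∫⁻ x, G x * F x ∂μ ≤ (∫⁻ x, G x * F x ^ p ∂μ) ^ (1/p) := by
      have h1 : ∫⁻ x, G x * F x ∂μ
          = ∫⁻ x, ((fun x => G x ^ (1/p) * F x) * (fun x => G x ^ (1/q))) x ∂μ := by
        refine lintegral_congr fun x => ?_
        simp only [Pi.mul_apply]
        rw [mul_right_comm, ← ENNReal.rpow_add _ _ (hG0 x) (hGtop x)]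
        rw [show 1/p + 1/q = 1 by rw [one_div, one_div]; exact hpq.inv_add_inv_eq_one, ENNReal.rpow_one]
      have h2 := ENNReal.lintegral_mul_le_Lp_mul_Lq μ hpq
        (f := fun x => G x ^ (1/p) * F x) (g := fun x => G x ^ (1/q))
        ((hG.pow_const (1/p)).mul hF).aemeasurable (hG.pow_const (1/q)).aemeasurable
      rw [h1]
      refine h2.trans_eq ?_
      have e1 : ∫⁻ x, (G x ^ (1/p) * F x) ^ p ∂μ = ∫⁻ x, G x * F x ^ p ∂μ := by
        refine lintegral_congr fun x => ?_
        rw [ENNReal.mul_rpow_of_nonneg _ _ hp0.le, ← ENNReal.rpow_mul,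
          one_div, inv_mul_cancel₀ hp0.ne', ENNReal.rpow_one]
      have e2 : ∫⁻ x, (G x ^ (1/q)) ^ q ∂μ = 1 := by
        rw [← hGint]
        refine lintegral_congr fun x => ?_
        rw [← ENNReal.rpow_mul, one_div, inv_mul_cancel₀ hpq.symm.pos.ne', ENNReal.rpow_one]
      rw [e1, e2, ENNReal.one_rpow, mul_one]
    calc (∫⁻ x, G x * F x ∂μ) ^ p ≤ ((∫⁻ x, G x * F x ^ p ∂μ) ^ (1/p)) ^ p :=
          ENNReal.rpow_le_rpow key hp0.le
      _ = ∫⁻ x, G x * F x ^ p ∂μ := by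
          rw [← ENNReal.rpow_mul, one_div, inv_mul_cancel₀ hp0.ne', ENNReal.rpow_one]

lemma convol_eLpNorm_le (n : ℕ) {p : ℝ} (hp : 1 ≤ p) {t : ℝ} (ht : 0 < t)
    (f : EuclideanSpace ℝ (Fin n) → ℝ) (hf : AEStronglyMeasurable f volume) :
    eLpNorm (convol (heatKernel n t) f) (ENNReal.ofReal p) volume
      ≤ eLpNorm f (ENNReal.ofReal p) volume := by
  -- reduce to strongly measurable f
  obtain ⟨f', hf'meas, hff'⟩ := hf
  have hconv_eq : convol (heatKernel n t) f = convol (heatKernel n t) f' := by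
    funext ξ
    refine integral_congr_ae ?_
    have hqmp : Measure.QuasiMeasurePreserving (fun η : EuclideanSpace ℝ (Fin n) => ξ - η)
        volume volume := (Measure.measurePreserving_sub_left volume ξ).quasiMeasurePreserving
    filter_upwards [hqmp.ae_eq hff'] with η hη
    rw [show f (ξ - η) = f' (ξ - η) from hη]
  rw [hconv_eq, eLpNorm_congr_ae hff']
  clear hconv_eq hff' f
  set f := f'
  -- now main argument
  have hP0 : ENNReal.ofReal p ≠ 0 := by
    simp [ENNReal.ofReal_eq_zero]; linarith
  have hPtop : ENNReal.ofReal p ≠ ∞ := ENNReal.ofReal_ne_top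
  have hPtoReal : (ENNReal.ofReal p).toReal = p := ENNReal.toReal_ofReal (by linarith)
  have hp0 : (0:ℝ) < p := by linarith
  set G : EuclideanSpace ℝ (Fin n) → ℝ≥0∞ := fun η => ENNReal.ofReal (heatKernel n t η) with hGdef
  have hGmeas : Measurable G :=
    ENNReal.measurable_ofReal.comp (heatKernel_continuous n t).measurable
  have hG0 : ∀ η, G η ≠ 0 := fun η => by
    simp only [hGdef, ne_eq, ENNReal.ofReal_eq_zero, not_le]
    exact heatKernel_pos n ht η
  have hGtop : ∀ η, G η ≠ ∞ := fun η => ENNReal.ofReal_ne_top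
  have hGint : ∫⁻ η, G η = 1 := lintegral_heatKernel n ht
  set F : EuclideanSpace ℝ (Fin n) → ℝ≥0∞ := fun x => (‖f x‖₊ : ℝ≥0∞) with hFdef
  have hFmeas : Measurable F := measurable_coe_nnreal_ennreal.comp hf'meas.measurable.nnnorm
  -- pointwise bound
  have hA : ∀ ξ, (‖convol (heatKernel n t) f ξ‖₊ : ℝ≥0∞) ^ p ≤ ∫⁻ η, G η * F (ξ - η) ^ p := by
    intro ξ
    have step1 : (‖convol (heatKernel n t) f ξ‖₊ : ℝ≥0∞) ≤ ∫⁻ η, G η * F (ξ - η) := by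
      refine (enorm_integral_le_lintegral_enorm _).trans_eq ?_
      refine lintegral_congr fun η => ?_
      rw [enorm_mul]
      congr 1
      exact Real.enorm_eq_ofReal (heatKernel_pos n ht η).le
    have hFshift : Measurable fun η : EuclideanSpace ℝ (Fin n) => F (ξ - η) :=
      hFmeas.comp (measurable_const.sub measurable_id)
    have step2 := jensen_step hp (μ := volume) (F := fun η => F (ξ - η)) hGmeas
      hFshift hG0 hGtop hGint
    exact (ENNReal.rpow_le_rpow step1 hp0.le).trans step2
  -- integrate
  have hCmeas : Measurable fun z : EuclideanSpace ℝ (Fin n) × EuclideanSpace ℝ (Fin n) =>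
      G z.2 * F (z.1 - z.2) ^ p :=
    (hGmeas.comp measurable_snd).mul
      ((hFmeas.comp (measurable_fst.sub measurable_snd)).pow_const p)
  have hswap : ∫⁻ ξ, ∫⁻ η, G η * F (ξ - η) ^ p = ∫⁻ η, ∫⁻ ξ, G η * F (ξ - η) ^ p :=
    lintegral_lintegral_swap hCmeas.aemeasurable
  have hinner : ∀ η, ∫⁻ ξ, G η * F (ξ - η) ^ p = G η * ∫⁻ x, F x ^ p := by
    intro η
    have hFm2 : Measurable fun ξ : EuclideanSpace ℝ (Fin n) => F (ξ - η) ^ p :=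
      (hFmeas.comp (measurable_id.sub measurable_const)).pow_const p
    rw [lintegral_const_mul _ hFm2]
    congr 1
    exact lintegral_sub_right_eq_self (fun x => F x ^ p) η
  have hmain : ∫⁻ ξ, (‖convol (heatKernel n t) f ξ‖₊ : ℝ≥0∞) ^ p ≤ ∫⁻ x, F x ^ p := by
    calc ∫⁻ ξ, (‖convol (heatKernel n t) f ξ‖₊ : ℝ≥0∞) ^ p
        ≤ ∫⁻ ξ, ∫⁻ η, G η * F (ξ - η) ^ p := lintegral_mono hA
      _ = ∫⁻ η, ∫⁻ ξ, G η * F (ξ - η) ^ p := hswap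
      _ = ∫⁻ η, G η * ∫⁻ x, F x ^ p := lintegral_congr hinner
      _ = (∫⁻ η, G η) * ∫⁻ x, F x ^ p := lintegral_mul_const _ hGmeas
      _ = ∫⁻ x, F x ^ p := by rw [hGint, one_mul]
  rw [eLpNorm_eq_lintegral_rpow_enorm_toReal hP0 hPtop, eLpNorm_eq_lintegral_rpow_enorm_toReal hP0 hPtop,
    hPtoReal]
  exact ENNReal.rpow_le_rpow hmain (by positivity)

/-- a continuous `δ̂`-closed 2-increment `q` with
`‖q_{ts}‖ ≤ C (t-s)^μ` for some `μ > 1` vanishes identically on the simplex. -/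
theorem regular_closed_two_increment_vanishes
    (n : ℕ) (hn : 1 ≤ n) (p : ℝ) (hp : 1 ≤ p) [Fact (1 ≤ ENNReal.ofReal p)]
    (S : ℝ → LpR n p →L[ℝ] LpR n p)
    (hS0 : S 0 = ContinuousLinearMap.id ℝ (LpR n p))
    (hSheat : ∀ t : ℝ, 0 < t → ∀ φ : LpR n p,
      ⇑(S t φ) =ᵐ[volume] convol (heatKernel n t) ⇑φ)
    (T : ℝ) (hT : 0 < T) (μ : ℝ) (hμ : 1 < μ)
    (q : ℝ → ℝ → LpR n p)
    (hqcont : ContinuousOn (fun r : ℝ × ℝ => q r.1 r.2)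
      {r : ℝ × ℝ | 0 ≤ r.2 ∧ r.2 ≤ r.1 ∧ r.1 ≤ T})
    (hqclosed : ∀ s u t : ℝ, 0 ≤ s → s ≤ u → u ≤ t → t ≤ T →
      q t s = q t u + S (t - u) (q u s))
    (C : ℝ)
    (hqbound : ∀ s t : ℝ, 0 ≤ s → s ≤ t → t ≤ T → ‖q t s‖ ≤ C * (t - s) ^ μ) :
    ∀ s t : ℝ, 0 ≤ s → s ≤ t → t ≤ T → q t s = 0 := by
  -- the heat semigroup is a contraction on Lᵖ
  have hS_le : ∀ r : ℝ, 0 ≤ r → ∀ φ : LpR n p, ‖S r φ‖ ≤ ‖φ‖ := by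
    intro r hr φ
    rcases hr.lt_or_eq with h | h
    · have h1 : eLpNorm (⇑(S r φ)) (ENNReal.ofReal p) volume
          = eLpNorm (convol (heatKernel n r) ⇑φ) (ENNReal.ofReal p) volume :=
        eLpNorm_congr_ae (hSheat r h φ)
      have h2 := convol_eLpNorm_le n hp h (⇑φ) (Lp.aestronglyMeasurable φ)
      rw [Lp.norm_def, Lp.norm_def]
      exact ENNReal.toReal_mono (Lp.eLpNorm_ne_top φ) (h1.trans_le h2)
    · rw [← h, hS0]; simp
  have hq0diag : ∀ u : ℝ, 0 ≤ u → u ≤ T → q u u = 0 := by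
    intro u hu huT
    have h := hqbound u u hu le_rfl huT
    rw [sub_self, Real.zero_rpow (by linarith : μ ≠ 0), mul_zero] at h
    exact norm_le_zero_iff.mp h
  intro s t hs hst htT
  rcases hst.lt_or_eq with hlt | heq
  swap
  · subst heq; exact hq0diag s hs htT
  -- main sewing bound
  have key : ∀ N : ℕ, 1 ≤ N → ‖q t s‖ ≤ C * ((t - s) / N) ^ μ * N := by
    intro N hN
    have hNpos : (0:ℝ) < N := by exact_mod_cast hN
    set δ := (t - s) / N with hδ
    have hδpos : 0 < δ := div_pos (by linarith) hNpos
    have hu : ∀ k : ℕ, k ≤ N → 0 ≤ s + (k:ℝ) * δ ∧ s + (k:ℝ) * δ ≤ t := by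
      intro k hk
      have hk' : (k:ℝ) ≤ N := by exact_mod_cast hk
      have h1 : (k:ℝ) * δ ≤ N * δ := mul_le_mul_of_nonneg_right hk' hδpos.le
      have h2 : (N:ℝ) * δ = t - s := by rw [hδ]; field_simp
      have h3 : (0:ℝ) ≤ (k:ℝ) * δ := by positivity
      constructor <;> linarith
    have claim : ∀ k : ℕ, k ≤ N →
        ‖q t s‖ ≤ ‖q t (s + (k:ℝ) * δ)‖ + (k:ℝ) * (C * δ ^ μ) := by
      intro k
      induction k with
      | zero => intro _; simp
      | succ k ih =>
        intro hk1
        have hk : k ≤ N := Nat.le_of_succ_le hk1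
        have h1 := ih hk
        obtain ⟨ha, hb⟩ := hu k hk
        obtain ⟨ha', hb'⟩ := hu (k+1) hk1
        have hcast : ((k+1 : ℕ) : ℝ) = (k:ℝ) + 1 := by push_cast; ring
        rw [hcast] at ha' hb' ⊢
        have hstep : s + (k:ℝ) * δ ≤ s + ((k:ℝ) + 1) * δ := by nlinarith
        have hrel := hqclosed (s + (k:ℝ)*δ) (s + ((k:ℝ)+1)*δ) t ha hstep hb' htT
        have hnorm1 : ‖q t (s + (k:ℝ)*δ)‖
            ≤ ‖q t (s + ((k:ℝ)+1)*δ)‖ + ‖q (s + ((k:ℝ)+1)*δ) (s + (k:ℝ)*δ)‖ := by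
          rw [hrel]
          refine (norm_add_le _ _).trans ?_
          have := hS_le (t - (s + ((k:ℝ)+1)*δ)) (by linarith)
            (q (s + ((k:ℝ)+1)*δ) (s + (k:ℝ)*δ))
          linarith
        have hbound : ‖q (s + ((k:ℝ)+1)*δ) (s + (k:ℝ)*δ)‖ ≤ C * δ ^ μ := by
          have hb2 := hqbound (s + (k:ℝ)*δ) (s + ((k:ℝ)+1)*δ) ha hstep (by linarith)
          have heq2 : (s + ((k:ℝ)+1)*δ) - (s + (k:ℝ)*δ) = δ := by ring
          rwa [heq2] at hb2
        calc ‖q t s‖ ≤ ‖q t (s + (k:ℝ)*δ)‖ + (k:ℝ) * (C * δ^μ) := h1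
          _ ≤ (‖q t (s + ((k:ℝ)+1)*δ)‖ + C * δ^μ) + (k:ℝ) * (C * δ^μ) := by linarith
          _ = ‖q t (s + ((k:ℝ)+1)*δ)‖ + ((k:ℝ)+1) * (C * δ^μ) := by ring
    have hfin := claim N le_rfl
    have huN : s + (N:ℝ) * δ = t := by rw [hδ]; field_simp; ring
    rw [huN, hq0diag t (le_trans hs hst) htT, norm_zero, zero_add] at hfin
    calc ‖q t s‖ ≤ (N:ℝ) * (C * δ^μ) := hfin
      _ = C * δ^μ * N := by ring
  have tend : Filter.Tendsto (fun N : ℕ => C * ((t - s) / N) ^ μ * N)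
      Filter.atTop (nhds 0) := by
    have h1 : Filter.Tendsto (fun N : ℕ => (N:ℝ) ^ (1 - μ)) Filter.atTop (nhds 0) := by
      have h0 := (tendsto_rpow_neg_atTop (by linarith : (0:ℝ) < μ - 1)).comp
        tendsto_natCast_atTop_atTop (α := ℕ)
      simpa [neg_sub, Function.comp_def] using h0
    have h2 : Filter.Tendsto (fun N : ℕ => C * (t-s)^μ * ((N:ℝ) ^ (1-μ)))
        Filter.atTop (nhds 0) := by
      simpa using h1.const_mul (C * (t-s)^μ)
    refine Filter.Tendsto.congr' ?_ h2
    filter_upwards [Filter.eventually_ge_atTop 1] with N hN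
    have hNpos : (0:ℝ) < N := by exact_mod_cast hN
    have hNμ : (0:ℝ) < (N:ℝ)^μ := Real.rpow_pos_of_pos hNpos μ
    rw [Real.rpow_sub hNpos, Real.rpow_one, Real.div_rpow (by linarith : (0:ℝ) ≤ t-s) hNpos.le]
    field_simp
  have hle0 : ‖q t s‖ ≤ 0 :=
    ge_of_tendsto tend (Filter.eventually_atTop.2 ⟨1, fun N hN => key N hN⟩)
  exact norm_le_zero_iff.mp hle0
end

section
/- Hölder bound for the twisted first-order operator: let γ ∈ (0,1), T > 0, and let x : [0,T] → ℝ have finite Hölder seminorm ‖x‖_γ = sup_{0≤s<t≤T} |x_t − x_s|/(t−s)^γ. For 0 ≤ s ≤ t ≤ T and φ ∈ L^p(ℝ^n), the Bochner integral in the definition X^x_{ts} φ = (x_t − x_s) S_{t−s}φ − ∫_s^t (x_t − x_u) (∂g_{t−u} * φ) du converges absolutely in L^p(ℝ^n), and there is a constant C depending only on n and γ such that ‖X^x_{ts} φ‖_{L^p(ℝ^n)} ≤ C ‖x‖_γ (t−s)^γ ‖φ‖_{L^p(ℝ^n)} for all 0 ≤ s ≤ t ≤ T. -/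
open MeasureTheory Real
open scoped ENNReal

/-- Time derivative of the heat kernel:
`∂g_t(ξ) = (2πt)^(-n/2) e^{-|ξ|²/(2t)} (|ξ|²/(2t²) - n/(2t))`. -/
noncomputable def heatKernelDt (n : ℕ) (t : ℝ) : EuclideanSpace ℝ (Fin n) → ℝ :=
  fun ξ => (2 * π * t) ^ (-(n : ℝ) / 2) * Real.exp (-‖ξ‖ ^ 2 / (2 * t)) *
    (‖ξ‖ ^ 2 / (2 * t ^ 2) - (n : ℝ) / (2 * t))

/-- Heat semigroup at the level of functions: `S_t φ = g_t * φ` for `t > 0`,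
`S_0 = Id` (also for `t ≤ 0`). -/
noncomputable def heatS (n : ℕ) (t : ℝ) (φ : EuclideanSpace ℝ (Fin n) → ℝ) :
    EuclideanSpace ℝ (Fin n) → ℝ :=
  if 0 < t then convol (heatKernel n t) φ else φ

section Aux
variable {n : ℕ}

local notation "E" => EuclideanSpace ℝ (Fin n)

lemma measurable_heatKernel2 : Measurable (fun q : ℝ × E => heatKernel n q.1 q.2) := by
  unfold heatKernel
  exact ((measurable_const.mul measurable_fst).pow measurable_const).mul
    ((((measurable_snd.norm.pow measurable_const).neg).div
      (measurable_const.mul measurable_fst)).exp)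

lemma measurable_heatKernelDt2 : Measurable (fun q : ℝ × E => heatKernelDt n q.1 q.2) := by
  unfold heatKernelDt
  exact (((measurable_const.mul measurable_fst).pow measurable_const).mul
    ((((measurable_snd.norm.pow measurable_const).neg).div
      (measurable_const.mul measurable_fst)).exp)).mul
    (((measurable_snd.norm.pow measurable_const).div
      (measurable_const.mul (measurable_fst.pow measurable_const))).sub
      (measurable_const.div (measurable_const.mul measurable_fst)))

lemma measurable_heatKernel (r : ℝ) : Measurable (heatKernel n r) :=
  measurable_heatKernel2.comp (measurable_const.prodMk measurable_id)

lemma measurable_heatKernelDt (r : ℝ) : Measurable (heatKernelDt n r) :=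
  measurable_heatKernelDt2.comp (measurable_const.prodMk measurable_id)

lemma integrable_gauss {b : ℝ} (hb : 0 < b) :
    Integrable (fun ξ : E => rexp (-b * ‖ξ‖ ^ 2)) := by
  have h := (GaussianFourier.integrable_cexp_neg_mul_sq_norm_add
    (V := E) (b := (b : ℂ)) (by simpa using hb) 0 0).norm
  refine h.congr (Filter.Eventually.of_forall fun ξ => ?_)
  have : ((↑‖ξ‖:ℂ) ^ 2).re = ‖ξ‖ ^ 2 := by
    norm_cast
  simp [Complex.norm_exp, this]

lemma integral_gauss {b : ℝ} (hb : 0 < b) :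
    ∫ ξ : E, rexp (-b * ‖ξ‖ ^ 2) = (π / b) ^ ((n : ℝ) / 2) := by
  rw [GaussianFourier.integral_rexp_neg_mul_sq_norm hb]
  simp [finrank_euclideanSpace_fin]

lemma heatKernel_nonneg {r : ℝ} (hr : 0 < r) (ξ : E) : 0 ≤ heatKernel n r ξ := by
  have hπ : 0 < π := pi_pos
  exact mul_nonneg (Real.rpow_nonneg (by positivity) _) (Real.exp_nonneg _)

lemma heatKernel_eq {r : ℝ} (hr : 0 < r) (ξ : E) :
    heatKernel n r ξ = (2*π*r) ^ (-(n:ℝ)/2) * rexp (-(1/(2*r)) * ‖ξ‖^2) := by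
  unfold heatKernel; congr 2; field_simp

lemma integrable_heatKernel_s9 {r : ℝ} (hr : 0 < r) : Integrable (heatKernel n r) := by
  have h : Integrable (fun ξ : E => (2*π*r) ^ (-(n:ℝ)/2) * rexp (-(1/(2*r)) * ‖ξ‖^2)) :=
    (integrable_gauss (by positivity)).const_mul _
  exact h.congr (Filter.Eventually.of_forall fun ξ => (heatKernel_eq hr ξ).symm)

lemma integral_heatKernel_s9 {r : ℝ} (hr : 0 < r) : ∫ ξ : E, heatKernel n r ξ = 1 := by
  have hπ : 0 < π := pi_pos
  have h2πr : (0:ℝ) < 2*π*r := by positivity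
  simp_rw [heatKernel_eq hr]
  rw [integral_const_mul, integral_gauss (by positivity : (0:ℝ) < 1/(2*r))]
  have : π / (1/(2*r)) = 2*π*r := by field_simp
  rw [this, ← Real.rpow_add h2πr, neg_div, neg_add_cancel, Real.rpow_zero]

lemma lintegral_heatKernel_s9 {r : ℝ} (hr : 0 < r) :
    ∫⁻ ξ : E, (‖heatKernel n r ξ‖₊ : ℝ≥0∞) = 1 := by
  have h1 : ∫⁻ ξ : E, (‖heatKernel n r ξ‖₊ : ℝ≥0∞)
      = ∫⁻ ξ : E, ENNReal.ofReal (heatKernel n r ξ) :=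
    lintegral_congr fun ξ => Real.enorm_eq_ofReal (heatKernel_nonneg hr ξ)
  rw [h1, ← ofReal_integral_eq_lintegral_ofReal (integrable_heatKernel_s9 hr)
    (Filter.Eventually.of_forall (heatKernel_nonneg hr)), integral_heatKernel_s9 hr]
  simp

lemma abs_heatKernelDt_le {r : ℝ} (hr : 0 < r) (ξ : E) :
    |heatKernelDt n r ξ| ≤ (((n:ℝ) + 4) / (2*r)) * ((2*π*r) ^ (-(n:ℝ)/2) * rexp (-(1/(4*r)) * ‖ξ‖^2)) := by
  have hπ : 0 < π := pi_pos
  set a : ℝ := (2*π*r) ^ (-(n:ℝ)/2) with ha_def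
  have ha : 0 ≤ a := Real.rpow_nonneg (by positivity) _
  set q : ℝ := ‖ξ‖^2/(2*r) with hq_def
  have hq : 0 ≤ q := by positivity
  have hrw : heatKernelDt n r ξ = a * rexp (-q) * (q/r - (n:ℝ)/(2*r)) := by
    unfold heatKernelDt; rw [ha_def, hq_def]
    have e1 : -‖ξ‖^2/(2*r) = -(‖ξ‖^2/(2*r)) := by ring
    have e2 : ‖ξ‖ ^ 2 / (2 * r ^ 2) = (‖ξ‖^2/(2*r))/r := by
      rw [div_div]; congr 1; ring
    rw [e1, e2]
  have hexp : rexp (-(1/(4*r)) * ‖ξ‖^2) = rexp (-(q/2)) := by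
    rw [hq_def]; congr 1
    rw [neg_mul, neg_inj, div_div, mul_comm (1/(4*r)) (‖ξ‖^2), mul_one_div]
    congr 1; ring
  rw [hrw, hexp, abs_mul, abs_mul, abs_of_nonneg ha, abs_of_nonneg (Real.exp_nonneg _)]
  have habs : |q/r - (n:ℝ)/(2*r)| ≤ q/r + (n:ℝ)/(2*r) := by
    have h1 : 0 ≤ q/r := by positivity
    have h2 : 0 ≤ (n:ℝ)/(2*r) := by positivity
    rw [abs_le]; constructor <;> linarith
  have key : q * rexp (-q) ≤ 2 * rexp (-(q/2)) := by
    have h1 : q/2 + 1 ≤ rexp (q/2) := Real.add_one_le_exp _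
    have h2 : q ≤ 2 * rexp (q/2) := by linarith
    calc q * rexp (-q) ≤ (2 * rexp (q/2)) * rexp (-q) :=
          mul_le_mul_of_nonneg_right h2 (Real.exp_nonneg _)
      _ = 2 * rexp (-(q/2)) := by rw [mul_assoc, ← Real.exp_add]; ring_nf
  have mono : rexp (-q) ≤ rexp (-(q/2)) := Real.exp_le_exp.2 (by linarith)
  calc a * rexp (-q) * |q/r - (n:ℝ)/(2*r)| ≤ a * rexp (-q) * (q/r + (n:ℝ)/(2*r)) :=
        mul_le_mul_of_nonneg_left habs (by positivity)
    _ = a * ((q * rexp (-q))/r) + (a * rexp (-q)) * ((n:ℝ)/(2*r)) := by ring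
    _ ≤ a * ((2 * rexp (-(q/2)))/r) + (a * rexp (-(q/2))) * ((n:ℝ)/(2*r)) := by
        gcongr
    _ = (((n:ℝ) + 4) / (2*r)) * (a * rexp (-(q/2))) := by field_simp; ring

lemma integrable_heatKernelDt {r : ℝ} (hr : 0 < r) : Integrable (heatKernelDt n r) := by
  refine Integrable.mono' (((integrable_gauss (by positivity : (0:ℝ) < 1/(4*r))).const_mul
    ((2*π*r) ^ (-(n:ℝ)/2))).const_mul (((n:ℝ) + 4) / (2*r)))
    (measurable_heatKernelDt r).aestronglyMeasurable
    (Filter.Eventually.of_forall fun ξ => ?_)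
  rw [Real.norm_eq_abs]
  exact abs_heatKernelDt_le hr ξ

noncomputable def heatB (n : ℕ) : ℝ := (((n:ℝ) + 4) / 2) * 2 ^ ((n:ℝ)/2)

lemma heatB_pos : 0 < heatB n := by
  unfold heatB
  have : (0:ℝ) < 2 ^ ((n:ℝ)/2) := Real.rpow_pos_of_pos (by norm_num) _
  positivity

lemma lintegral_heatKernelDt_le {r : ℝ} (hr : 0 < r) :
    ∫⁻ ξ : E, (‖heatKernelDt n r ξ‖₊ : ℝ≥0∞) ≤ ENNReal.ofReal (heatB n / r) := by
  have hπ : 0 < π := pi_pos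
  have h2πr : (0:ℝ) < 2*π*r := by positivity
  set bnd : E → ℝ := fun ξ =>
    (((n:ℝ) + 4) / (2*r)) * ((2*π*r) ^ (-(n:ℝ)/2) * rexp (-(1/(4*r)) * ‖ξ‖^2)) with hbnd
  have hbint : Integrable bnd :=
    ((integrable_gauss (by positivity : (0:ℝ) < 1/(4*r))).const_mul _).const_mul _
  have h1 : ∫⁻ ξ : E, (‖heatKernelDt n r ξ‖₊ : ℝ≥0∞) ≤ ∫⁻ ξ : E, ENNReal.ofReal (bnd ξ) := by
    refine lintegral_mono fun ξ => ?_
    rw [← Real.nnnorm_abs, ← enorm_eq_nnnorm, Real.enorm_eq_ofReal (abs_nonneg _)]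
    exact ENNReal.ofReal_le_ofReal (abs_heatKernelDt_le hr ξ)
  have hbnn : 0 ≤ᵐ[(volume : Measure E)] bnd := by
    refine Filter.Eventually.of_forall fun ξ => ?_
    have : (0:ℝ) ≤ (2*π*r) ^ (-(n:ℝ)/2) := Real.rpow_nonneg (le_of_lt h2πr) _
    have h2 : (0:ℝ) ≤ rexp (-(1/(4*r)) * ‖ξ‖^2) := Real.exp_nonneg _
    positivity
  rw [← ofReal_integral_eq_lintegral_ofReal hbint hbnn] at h1
  refine h1.trans (ENNReal.ofReal_le_ofReal (le_of_eq ?_))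
  rw [hbnd]
  simp only [integral_const_mul]
  rw [integral_gauss (by positivity : (0:ℝ) < 1/(4*r))]
  have h4 : π / (1/(4*r)) = 2 * (2*π*r) := by field_simp; ring
  rw [h4, Real.mul_rpow (by norm_num) (le_of_lt h2πr)]
  have h5 : (2*π*r) ^ (-(n:ℝ)/2) * (2 * π * r) ^ ((n:ℝ)/2) = 1 := by
    rw [← Real.rpow_add h2πr, neg_div, neg_add_cancel, Real.rpow_zero]
  have h6 : ((n:ℝ) + 4) / (2 * r) * ((2*π*r) ^ (-(n:ℝ)/2) *
      (2 ^ ((n:ℝ)/2) * (2 * π * r) ^ ((n:ℝ)/2)))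
      = (((n:ℝ) + 4) / (2 * r) * 2 ^ ((n:ℝ)/2)) *
        ((2*π*r) ^ (-(n:ℝ)/2) * (2 * π * r) ^ ((n:ℝ)/2)) := by ring
  rw [h6, h5, mul_one]
  unfold heatB
  field_simp

lemma lintegral_sub_left_eq (Φ : E → ℝ≥0∞) (ξ : E) : ∫⁻ η, Φ (ξ - η) = ∫⁻ η, Φ η :=
  (Measure.measurePreserving_sub_left (volume : Measure E) ξ).lintegral_comp_emb
    (MeasurableEquiv.subLeft ξ).measurableEmbedding Φ

lemma lintegral_sub_right_eq (Φ : E → ℝ≥0∞) (η : E) : ∫⁻ ξ, Φ (ξ - η) = ∫⁻ ξ, Φ ξ :=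
  (measurePreserving_sub_right (volume : Measure E) η).lintegral_comp_emb
    (MeasurableEquiv.subRight η).measurableEmbedding Φ

/-- Core of Young's convolution inequality at the level of `lintegral`s. -/
lemma young_core {p : ℝ} (hp : 1 ≤ p) {K Φ : E → ℝ≥0∞} (hK : Measurable K)
    (hΦ : Measurable Φ) (hKfin : ∫⁻ η, K η ≠ ∞) :
    ∫⁻ ξ, (∫⁻ η, K η * Φ (ξ - η)) ^ p ≤ (∫⁻ η, K η) ^ p * ∫⁻ ξ, Φ ξ ^ p := by
  have hp0 : 0 < p := lt_of_lt_of_le one_pos hp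
  set I : ℝ≥0∞ := ∫⁻ η, K η with hI
  -- Tonelli computation used in both cases
  have tonelli : ∫⁻ ξ, ∫⁻ η, K η * Φ (ξ - η) ^ p = I * ∫⁻ ξ, Φ ξ ^ p := by
    have hmeas : Measurable (fun q : E × E => K q.2 * Φ (q.1 - q.2) ^ p) :=
      (hK.comp measurable_snd).mul
        (((hΦ.comp (measurable_fst.sub measurable_snd))).pow_const _)
    rw [lintegral_lintegral_swap hmeas.aemeasurable]
    calc ∫⁻ η, ∫⁻ ξ, K η * Φ (ξ - η) ^ p
        = ∫⁻ η, K η * ∫⁻ ξ, Φ (ξ - η) ^ p := by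
          refine lintegral_congr fun η => lintegral_const_mul _ ?_
          exact (hΦ.comp (measurable_id.sub measurable_const)).pow_const _
      _ = ∫⁻ η, K η * ∫⁻ ξ, Φ ξ ^ p := by
          refine lintegral_congr fun η => ?_
          rw [lintegral_sub_right_eq (fun ξ => Φ ξ ^ p) η]
      _ = I * ∫⁻ ξ, Φ ξ ^ p := lintegral_mul_const'' _ hK.aemeasurable
  rcases eq_or_lt_of_le hp with hp1 | hp1
  · -- p = 1
    rw [← hp1] at tonelli ⊢
    simp only [ENNReal.rpow_one] at tonelli ⊢
    exact le_of_eq tonelli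
  · -- 1 < p
    rcases eq_or_ne I 0 with hI0 | hI0
    · -- K = 0 a.e.
      have hK0 : K =ᵐ[volume] 0 := (lintegral_eq_zero_iff hK).1 hI0
      have : ∀ᵐ η ∂(volume : Measure E), ∀ ξ : E, K η * Φ (ξ - η) = 0 := by
        filter_upwards [hK0] with η hη ξ
        simp [hη]
      have hz : ∀ ξ, ∫⁻ η, K η * Φ (ξ - η) = 0 := by
        intro ξ
        have hm : Measurable fun η : E => K η * Φ (ξ - η) :=
          hK.mul (hΦ.comp (measurable_const.sub measurable_id))
        refine (lintegral_eq_zero_iff hm).2 ?_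
        filter_upwards [hK0] with η hη
        simp [hη]
      simp only [hz, ENNReal.zero_rpow_of_pos hp0, lintegral_zero]
      exact zero_le
    · set q : ℝ := p / (p - 1) with hq
      have hpq : p.HolderConjugate q := Real.HolderConjugate.conjExponent hp1
      have hq0 : q ≠ 0 := ne_of_gt hpq.symm.pos
      -- pointwise Hölder
      have pointwise : ∀ ξ, (∫⁻ η, K η * Φ (ξ - η)) ^ p
          ≤ I ^ (p - 1) * ∫⁻ η, K η * Φ (ξ - η) ^ p := by
        intro ξ
        have hmeasKp : AEMeasurable (fun η => K η ^ (1/q)) (volume : Measure E) :=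
          (hK.pow_const _).aemeasurable
        have hmeasKΦ : AEMeasurable (fun η => (K η ^ (1/p)) * Φ (ξ - η)) volume :=
          ((hK.pow_const _).mul (hΦ.comp (measurable_const.sub measurable_id))).aemeasurable
        have hsplit : ∀ η, K η * Φ (ξ - η) = (K η ^ (1/q)) * ((K η ^ (1/p)) * Φ (ξ - η)) := by
          intro η
          have hqp1 : 1/q + 1/p = 1 := by
            rw [one_div, one_div]; exact hpq.symm.inv_add_inv_eq_one
          rw [← mul_assoc, ← ENNReal.rpow_add_of_nonneg _ _
            (le_of_lt (one_div_pos.2 hpq.symm.pos)) (le_of_lt (one_div_pos.2 hpq.pos)),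
            hqp1, ENNReal.rpow_one]
        have holder : ∫⁻ η, K η * Φ (ξ - η)
            ≤ (∫⁻ η, (K η ^ (1/q)) ^ q) ^ (1/q) *
              (∫⁻ η, ((K η ^ (1/p)) * Φ (ξ - η)) ^ p) ^ (1/p) := by
          calc ∫⁻ η, K η * Φ (ξ - η)
              = ∫⁻ η, (K η ^ (1/q)) * ((K η ^ (1/p)) * Φ (ξ - η)) :=
                lintegral_congr hsplit
            _ ≤ _ := by
                have := ENNReal.lintegral_mul_le_Lp_mul_Lq (volume : Measure E)
                  hpq.symm hmeasKp hmeasKΦ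
                simpa [mul_comm] using this
        have hKq : ∫⁻ η, (K η ^ (1/q)) ^ q = I := by
          refine lintegral_congr fun η => ?_
          rw [← ENNReal.rpow_mul, one_div, inv_mul_cancel₀ hq0, ENNReal.rpow_one]
        have hKΦp : ∫⁻ η, ((K η ^ (1/p)) * Φ (ξ - η)) ^ p = ∫⁻ η, K η * Φ (ξ - η) ^ p := by
          refine lintegral_congr fun η => ?_
          rw [ENNReal.mul_rpow_of_nonneg _ _ (le_of_lt hp0), ← ENNReal.rpow_mul, one_div,
            inv_mul_cancel₀ (ne_of_gt hp0), ENNReal.rpow_one]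
        rw [hKq, hKΦp] at holder
        calc (∫⁻ η, K η * Φ (ξ - η)) ^ p
            ≤ (I ^ (1/q) * (∫⁻ η, K η * Φ (ξ - η) ^ p) ^ (1/p)) ^ p :=
              ENNReal.rpow_le_rpow holder (le_of_lt hp0)
          _ = I ^ (p - 1) * ∫⁻ η, K η * Φ (ξ - η) ^ p := by
              rw [ENNReal.mul_rpow_of_nonneg _ _ (le_of_lt hp0), ← ENNReal.rpow_mul,
                ← ENNReal.rpow_mul, one_div, one_div, inv_mul_cancel₀ (ne_of_gt hp0),
                ENNReal.rpow_one]
              congr 2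
              rw [hq]
              field_simp
      calc ∫⁻ ξ, (∫⁻ η, K η * Φ (ξ - η)) ^ p
          ≤ ∫⁻ ξ, I ^ (p - 1) * ∫⁻ η, K η * Φ (ξ - η) ^ p := lintegral_mono pointwise
        _ = I ^ (p - 1) * ∫⁻ ξ, ∫⁻ η, K η * Φ (ξ - η) ^ p := by
            rw [lintegral_const_mul' _ _ (ENNReal.rpow_ne_top_of_nonneg (by linarith) hKfin)]
        _ = I ^ (p - 1) * (I * ∫⁻ ξ, Φ ξ ^ p) := by rw [tonelli]
        _ = (I ^ (p - 1) * I) * ∫⁻ ξ, Φ ξ ^ p := by ring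
        _ = I ^ p * ∫⁻ ξ, Φ ξ ^ p := by
            congr 1
            nth_rewrite 2 [← ENNReal.rpow_one I]
            rw [← ENNReal.rpow_add_of_nonneg _ _ (by linarith) (by norm_num)]
            norm_num

lemma convol_congr {k φ φ' : E → ℝ} (h : φ =ᵐ[(volume : Measure E)] φ') (ξ : E) :
    convol k φ ξ = convol k φ' ξ := by
  unfold convol
  refine integral_congr_ae ?_
  have h2 : (fun η : E => φ (ξ - η)) =ᵐ[(volume : Measure E)] fun η => φ' (ξ - η) :=
    (Measure.measurePreserving_sub_left (volume : Measure E) ξ).quasiMeasurePreserving.ae_eq_comp h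
  filter_upwards [h2] with η hη
  rw [hη]

lemma stronglyMeasurable_convol {k φ : E → ℝ} (hk : Measurable k) (hφ : Measurable φ) :
    StronglyMeasurable (convol k φ) := by
  apply MeasureTheory.StronglyMeasurable.integral_prod_right'
    (f := fun q : E × E => k q.2 * φ (q.1 - q.2))
  exact ((hk.comp measurable_snd).mul (hφ.comp (measurable_fst.sub measurable_snd))).stronglyMeasurable

lemma eLpNorm_convol_le {p : ℝ} (hp : 1 ≤ p) {k φ : E → ℝ} (hk : Measurable k)
    (hφ : Measurable φ) (hkfin : ∫⁻ η, (‖k η‖₊ : ℝ≥0∞) ≠ ∞) :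
    eLpNorm (convol k φ) (ENNReal.ofReal p) volume
      ≤ (∫⁻ η, (‖k η‖₊ : ℝ≥0∞)) * eLpNorm φ (ENNReal.ofReal p) volume := by
  have hp0 : 0 < p := lt_of_lt_of_le one_pos hp
  have hq0 : ENNReal.ofReal p ≠ 0 := by
    simp only [ne_eq, ENNReal.ofReal_eq_zero, not_le]; linarith
  have hqt : ENNReal.ofReal p ≠ ∞ := ENNReal.ofReal_ne_top
  rw [eLpNorm_eq_lintegral_rpow_enorm_toReal hq0 hqt, eLpNorm_eq_lintegral_rpow_enorm_toReal hq0 hqt,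
    ENNReal.toReal_ofReal (le_of_lt hp0)]
  have key := young_core (n := n) hp (K := fun η => (‖k η‖₊ : ℝ≥0∞))
    (Φ := fun η => (‖φ η‖₊ : ℝ≥0∞)) hk.enorm hφ.enorm hkfin
  have ptw : ∀ ξ : E, (‖convol k φ ξ‖₊ : ℝ≥0∞) ≤ ∫⁻ η, (‖k η‖₊ : ℝ≥0∞) * ‖φ (ξ - η)‖₊ := by
    intro ξ
    calc (‖convol k φ ξ‖₊ : ℝ≥0∞) ≤ ∫⁻ η, ‖k η * φ (ξ - η)‖₊ :=
          enorm_integral_le_lintegral_enorm _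
      _ = _ := by simp_rw [nnnorm_mul, ENNReal.coe_mul]
  calc (∫⁻ ξ, (‖convol k φ ξ‖₊ : ℝ≥0∞) ^ p) ^ (1/p)
      ≤ (∫⁻ ξ, (∫⁻ η, (‖k η‖₊ : ℝ≥0∞) * ‖φ (ξ - η)‖₊) ^ p) ^ (1/p) := by
        refine ENNReal.rpow_le_rpow ?_ (by positivity)
        exact lintegral_mono fun ξ => ENNReal.rpow_le_rpow (ptw ξ) (le_of_lt hp0)
    _ ≤ ((∫⁻ η, (‖k η‖₊ : ℝ≥0∞)) ^ p * ∫⁻ ξ, (‖φ ξ‖₊ : ℝ≥0∞) ^ p) ^ (1/p) :=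
        ENNReal.rpow_le_rpow key (by positivity)
    _ = (∫⁻ η, (‖k η‖₊ : ℝ≥0∞)) * (∫⁻ ξ, (‖φ ξ‖₊ : ℝ≥0∞) ^ p) ^ (1/p) := by
        rw [ENNReal.mul_rpow_of_nonneg _ _ (by positivity), ← ENNReal.rpow_mul,
          mul_one_div, div_self (ne_of_gt hp0), ENNReal.rpow_one]

lemma lintegral_ofReal_rpow_Ioc {s t γ c : ℝ} (hst : s < t) (hγ0 : 0 < γ) (hγ1 : γ < 1)
    (hc : 0 ≤ c) :
    ∫⁻ u in Set.Ioc s t, ENNReal.ofReal (c * (t - u) ^ (γ - 1))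
      ≤ ENNReal.ofReal (c * ((t - s) ^ γ / γ)) := by
  have hii0 : IntervalIntegrable (fun x : ℝ => x ^ (γ - 1)) volume 0 (t - s) :=
    intervalIntegral.intervalIntegrable_rpow' (by linarith)
  have hii : IntervalIntegrable (fun u : ℝ => (t - u) ^ (γ - 1)) volume s t := by
    have := hii0.comp_sub_left t
    simpa using this.symm
  have hIoc : IntegrableOn (fun u : ℝ => c * (t - u) ^ (γ - 1)) (Set.Ioc s t) volume := by
    have := (intervalIntegrable_iff_integrableOn_Ioc_of_le (le_of_lt hst)).1 hii
    exact this.const_mul c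
  have hnn : 0 ≤ᵐ[(volume : Measure ℝ).restrict (Set.Ioc s t)]
      fun u => c * (t - u) ^ (γ - 1) := by
    refine (ae_restrict_iff' measurableSet_Ioc).2 (Filter.Eventually.of_forall fun u hu => ?_)
    have : (0:ℝ) ≤ (t - u) ^ (γ - 1) := Real.rpow_nonneg (by linarith [hu.2]) _
    positivity
  rw [← ofReal_integral_eq_lintegral_ofReal hIoc hnn]
  refine ENNReal.ofReal_le_ofReal (le_of_eq ?_)
  rw [← intervalIntegral.integral_of_le (le_of_lt hst), intervalIntegral.integral_const_mul,
    intervalIntegral.integral_comp_sub_left (fun x : ℝ => x ^ (γ - 1)) t, sub_self]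
  rw [integral_rpow (Or.inl (by linarith))]
  rw [Real.zero_rpow (by intro h0; linarith [h0 ▸ hγ0] : γ - 1 + 1 ≠ 0)]
  congr 1
  rw [sub_add_cancel]
  ring_nf

end Aux

/-- Hölder bound for the twisted first-order operator
`X^x_{ts} φ = (x_t - x_s) S_{t-s}φ - ∫_s^t (x_t - x_u)(∂g_{t-u} * φ) du`.
For a `γ`-Hölder signal `x` (with seminorm bounded by `Cx`), the integral
converges absolutely in `L^p(ℝ^n)` and
`‖X^x_{ts}φ‖_{L^p} ≤ C · Cx · (t-s)^γ · ‖φ‖_{L^p}`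
with `C` depending only on `n` and `γ`. -/
theorem twisted_first_order_operator_holder_bound
    (n : ℕ) (hn : 1 ≤ n) (γ : ℝ) (hγ0 : 0 < γ) (hγ1 : γ < 1) :
    ∃ C : ℝ, 0 < C ∧
      ∀ (p : ℝ), 1 ≤ p → ∀ (T : ℝ), 0 < T →
      ∀ (x : ℝ → ℝ) (Cx : ℝ),
        (∀ s t : ℝ, 0 ≤ s → s ≤ t → t ≤ T → |x t - x s| ≤ Cx * (t - s) ^ γ) →
      ∀ φ : EuclideanSpace ℝ (Fin n) → ℝ, MemLp φ (ENNReal.ofReal p) volume →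
      ∀ s t : ℝ, 0 ≤ s → s ≤ t → t ≤ T →
        ((∫⁻ u in Set.Ioc s t,
            eLpNorm (fun ξ => (x t - x u) * convol (heatKernelDt n (t - u)) φ ξ)
              (ENNReal.ofReal p) volume) < ⊤) ∧
        eLpNorm
            (fun ξ => (x t - x s) * heatS n (t - s) φ ξ
              - ∫ u in s..t, (x t - x u) * convol (heatKernelDt n (t - u)) φ ξ)
            (ENNReal.ofReal p) volume ≤
          ENNReal.ofReal (C * Cx * (t - s) ^ γ) *
            eLpNorm φ (ENNReal.ofReal p) volume := by
  have hBpos : 0 < heatB n := heatB_pos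
  refine ⟨1 + heatB n / γ, by positivity, ?_⟩
  intro p hp T hT x Cx hx φ hφ s t hs hst htT
  have hp0 : 0 < p := lt_of_lt_of_le one_pos hp
  set q : ℝ≥0∞ := ENNReal.ofReal p with hq_def
  have hq0 : q ≠ 0 := by simp only [hq_def, ne_eq, ENNReal.ofReal_eq_zero, not_le]; linarith
  have hqt : q ≠ ∞ := ENNReal.ofReal_ne_top
  have hq1 : 1 ≤ q := ENNReal.one_le_ofReal.2 hp
  have hCx : 0 ≤ Cx := by
    have h1 := hx 0 T le_rfl (le_of_lt hT) le_rfl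
    have h2 := (abs_nonneg (x T - x 0)).trans h1
    have h3 : (0:ℝ) < (T - 0) ^ γ := Real.rpow_pos_of_pos (by linarith) γ
    nlinarith
  -- measurable representative of φ
  obtain ⟨φ', hφ'sm, hφeq⟩ := hφ.1
  have hφ'm : Measurable φ' := hφ'sm.measurable
  have hφnorm : eLpNorm φ q volume = eLpNorm φ' q volume := eLpNorm_congr_ae hφeq
  have hφfin : eLpNorm φ' q volume ≠ ∞ := by
    rw [← hφnorm]; exact ne_of_lt hφ.2
  have hconv_phi : ∀ (k : EuclideanSpace ℝ (Fin n) → ℝ) (ξ : EuclideanSpace ℝ (Fin n)),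
      convol k φ ξ = convol k φ' ξ := fun k ξ => convol_congr hφeq ξ
  -- continuous modification of x
  set pr : ℝ → ℝ := fun u => max 0 (min u T) with hpr_def
  have hpr_mem : ∀ u, 0 ≤ pr u ∧ pr u ≤ T := by
    intro u
    exact ⟨le_max_left _ _, max_le (le_of_lt hT) (min_le_right _ _)⟩
  have hpr_eq : ∀ u, 0 ≤ u → u ≤ T → pr u = u := by
    intro u h1 h2
    simp only [hpr_def]
    rw [min_eq_left h2, max_eq_right h1]
  have hpr_lip : ∀ u v, |pr u - pr v| ≤ |u - v| := by
    intro u v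
    have h1 : |pr u - pr v| ≤ |min u T - min v T| := by
      simp only [hpr_def]
      calc |max 0 (min u T) - max 0 (min v T)| = |max (min u T) 0 - max (min v T) 0| := by
            rw [max_comm 0, max_comm 0]
        _ ≤ |min u T - min v T| := abs_max_sub_max_le_abs _ _ _
    refine h1.trans ?_
    calc |min u T - min v T| ≤ max |u - v| |T - T| := abs_min_sub_min_le_max _ _ _ _
      _ = |u - v| := by simp
  set xc : ℝ → ℝ := fun u => x (pr u) with hxc_def
  have hxcx : ∀ u, 0 ≤ u → u ≤ T → xc u = x u := by
    intro u h1 h2; simp only [hxc_def]; rw [hpr_eq u h1 h2]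
  have hxc_bd : ∀ u v, |xc u - xc v| ≤ Cx * |u - v| ^ γ := by
    intro u v
    have key : ∀ a b, pr a ≤ pr b → |xc b - xc a| ≤ Cx * |b - a| ^ γ := by
      intro a b hab
      have h1 := hx (pr a) (pr b) (hpr_mem a).1 hab (hpr_mem b).2
      refine h1.trans ?_
      refine mul_le_mul_of_nonneg_left ?_ hCx
      have h2 : pr b - pr a ≤ |b - a| := by
        calc pr b - pr a ≤ |pr b - pr a| := le_abs_self _
          _ = |pr a - pr b| := abs_sub_comm _ _
          _ ≤ |a - b| := hpr_lip a b
          _ = |b - a| := abs_sub_comm _ _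
      exact Real.rpow_le_rpow (by linarith) h2 (le_of_lt hγ0)
    rcases le_total (pr v) (pr u) with h | h
    · exact key v u h
    · rw [abs_sub_comm, abs_sub_comm u v]; exact key u v h
  have hxc_cont : Continuous xc := by
    have hh : HolderWith Cx.toNNReal γ.toNNReal xc := by
      intro u v
      rw [edist_dist, edist_dist, Real.dist_eq, Real.dist_eq]
      calc ENNReal.ofReal |xc u - xc v| ≤ ENNReal.ofReal (Cx * |u - v| ^ γ) :=
            ENNReal.ofReal_le_ofReal (hxc_bd u v)
        _ = ENNReal.ofReal Cx * ENNReal.ofReal (|u - v| ^ γ) := ENNReal.ofReal_mul hCx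
        _ = ↑Cx.toNNReal * ENNReal.ofReal |u - v| ^ (γ.toNNReal : ℝ) := by
            rw [Real.coe_toNNReal _ (le_of_lt hγ0),
              ENNReal.ofReal_rpow_of_nonneg (abs_nonneg _) (le_of_lt hγ0)]
            rfl
    exact hh.continuous (by simpa using hγ0)
  have hxc_meas : Measurable xc := hxc_cont.measurable
  -- dispatch the degenerate case s = t
  rcases eq_or_lt_of_le hst with heq | hlt
  · subst heq
    constructor
    · simp
    · have hzero : (fun ξ => (x s - x s) * heatS n (s - s) φ ξ
          - ∫ u in s..s, (x s - x u) * convol (heatKernelDt n (s - u)) φ ξ)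
          = fun _ => (0:ℝ) := by
        funext ξ
        rw [intervalIntegral.integral_same]
        simp
      rw [hzero]
      simp [eLpNorm_zero]
  · have hts : 0 < t - s := sub_pos.2 hlt
    have hDt : ∀ r : ℝ, 0 < r → eLpNorm (convol (heatKernelDt n r) φ') q volume
        ≤ ENNReal.ofReal (heatB n / r) * eLpNorm φ' q volume := by
      intro r hr
      refine le_trans (eLpNorm_convol_le hp (measurable_heatKernelDt r) hφ'm
        (ne_of_lt (lt_of_le_of_lt (lintegral_heatKernelDt_le hr) ENNReal.ofReal_lt_top))) ?_
      exact mul_le_mul_left (lintegral_heatKernelDt_le hr) _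
    have hbound_u : ∀ u ∈ Set.Ioo s t,
        eLpNorm (fun ξ => (x t - x u) * convol (heatKernelDt n (t - u)) φ ξ) q volume
          ≤ ENNReal.ofReal (Cx * heatB n * (t - u) ^ (γ - 1)) * eLpNorm φ' q volume := by
      intro u hu
      have hr : 0 < t - u := sub_pos.2 hu.2
      have h1 : (fun ξ => (x t - x u) * convol (heatKernelDt n (t - u)) φ ξ)
          = (x t - x u) • convol (heatKernelDt n (t - u)) φ' := by
        funext ξ; rw [hconv_phi]; rfl
      rw [h1, eLpNorm_const_smul]
      have h2 : (‖x t - x u‖₊ : ℝ≥0∞) ≤ ENNReal.ofReal (Cx * (t - u) ^ γ) := by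
        rw [← Real.nnnorm_abs (x t - x u), ← enorm_eq_nnnorm, Real.enorm_eq_ofReal (abs_nonneg _)]
        exact ENNReal.ofReal_le_ofReal
          (hx u t (hs.trans (le_of_lt hu.1)) (le_of_lt hu.2) htT)
      have h3 : (t - u) ^ (γ - 1) = (t - u) ^ γ / (t - u) := by
        rw [Real.rpow_sub hr, Real.rpow_one]
      calc (‖x t - x u‖₊ : ℝ≥0∞) • eLpNorm (convol (heatKernelDt n (t - u)) φ') q volume
          = (‖x t - x u‖₊ : ℝ≥0∞) * eLpNorm (convol (heatKernelDt n (t - u)) φ') q volume := rfl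
        _ ≤ ENNReal.ofReal (Cx * (t - u) ^ γ) *
            (ENNReal.ofReal (heatB n / (t - u)) * eLpNorm φ' q volume) :=
            mul_le_mul' h2 (hDt _ hr)
        _ = ENNReal.ofReal (Cx * heatB n * (t - u) ^ (γ - 1)) * eLpNorm φ' q volume := by
            rw [← mul_assoc, ← ENNReal.ofReal_mul (by positivity)]
            congr 2
            rw [h3]
            ring
    constructor
    · calc ∫⁻ u in Set.Ioc s t,
            eLpNorm (fun ξ => (x t - x u) * convol (heatKernelDt n (t - u)) φ ξ) q volume
          = ∫⁻ u in Set.Ioo s t,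
            eLpNorm (fun ξ => (x t - x u) * convol (heatKernelDt n (t - u)) φ ξ) q volume :=
            (setLIntegral_congr (MeasureTheory.Ioo_ae_eq_Ioc (μ := volume) (a := s) (b := t))).symm
        _ ≤ ∫⁻ u in Set.Ioo s t,
            ENNReal.ofReal (Cx * heatB n * (t - u) ^ (γ - 1)) * eLpNorm φ' q volume :=
            setLIntegral_mono' measurableSet_Ioo hbound_u
        _ ≤ ∫⁻ u in Set.Ioc s t,
            ENNReal.ofReal (Cx * heatB n * (t - u) ^ (γ - 1)) * eLpNorm φ' q volume :=
            lintegral_mono_set Set.Ioo_subset_Ioc_self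
        _ = (∫⁻ u in Set.Ioc s t, ENNReal.ofReal (Cx * heatB n * (t - u) ^ (γ - 1)))
            * eLpNorm φ' q volume := lintegral_mul_const' _ _ hφfin
        _ < ⊤ := ENNReal.mul_lt_top
            ((lintegral_ofReal_rpow_Ioc hlt hγ0 hγ1 (by positivity)).trans_lt
              ENNReal.ofReal_lt_top) (lt_of_le_of_ne le_top hφfin)
    · -- main estimate
      have hD2 : Measurable fun w : EuclideanSpace ℝ (Fin n) × ℝ =>
          (xc t - xc w.2) * heatKernelDt n (t - w.2) w.1 :=
        (measurable_const.sub (hxc_meas.comp measurable_snd)).mul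
          (measurable_heatKernelDt2.comp
            ((measurable_const.sub measurable_snd).prodMk measurable_fst))
      set ν := (volume : Measure ℝ).restrict (Set.Ioc s t) with hν
      set k2 : EuclideanSpace ℝ (Fin n) → ℝ :=
        fun η => ∫ u, (xc t - xc u) * heatKernelDt n (t - u) η ∂ν with hk2
      have hk2m : Measurable k2 :=
        (hD2.stronglyMeasurable.integral_prod_right' (ν := ν)).measurable
      set Kt : EuclideanSpace ℝ (Fin n) → ℝ≥0∞ :=
        fun η => ∫⁻ u, (‖(xc t - xc u) * heatKernelDt n (t - u) η‖₊ : ℝ≥0∞) ∂ν with hKt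
      have hKt_meas_w : Measurable fun w : EuclideanSpace ℝ (Fin n) × ℝ =>
          (‖(xc t - xc w.2) * heatKernelDt n (t - w.2) w.1‖₊ : ℝ≥0∞) := hD2.enorm
      have hKtm : Measurable Kt := hKt_meas_w.lintegral_prod_right'
      have hKt_bound : ∫⁻ η, Kt η ≤ ENNReal.ofReal (Cx * heatB n * ((t - s) ^ γ / γ)) := by
        have swap : ∫⁻ η, Kt η
            = ∫⁻ u, (∫⁻ η, (‖(xc t - xc u) * heatKernelDt n (t - u) η‖₊ : ℝ≥0∞)) ∂ν :=
          lintegral_lintegral_swap hKt_meas_w.aemeasurable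
        rw [swap, hν]
        have per_u : ∀ u ∈ Set.Ioo s t,
            (∫⁻ η, (‖(xc t - xc u) * heatKernelDt n (t - u) η‖₊ : ℝ≥0∞))
              ≤ ENNReal.ofReal (Cx * heatB n * (t - u) ^ (γ - 1)) := by
          intro u hu
          have hr : 0 < t - u := sub_pos.2 hu.2
          have e1 : (∫⁻ η, (‖(xc t - xc u) * heatKernelDt n (t - u) η‖₊ : ℝ≥0∞))
              = (‖xc t - xc u‖₊ : ℝ≥0∞) * ∫⁻ η, (‖heatKernelDt n (t - u) η‖₊ : ℝ≥0∞) := by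
            simp_rw [nnnorm_mul, ENNReal.coe_mul]
            rw [lintegral_const_mul _ (measurable_heatKernelDt (t - u)).nnnorm.coe_nnreal_ennreal]
          rw [e1]
          have h2 : (‖xc t - xc u‖₊ : ℝ≥0∞) ≤ ENNReal.ofReal (Cx * (t - u) ^ γ) := by
            rw [← Real.nnnorm_abs, ← enorm_eq_nnnorm, Real.enorm_eq_ofReal (abs_nonneg _)]
            refine ENNReal.ofReal_le_ofReal ((hxc_bd t u).trans (le_of_eq ?_))
            rw [abs_of_pos hr]
          refine le_trans (mul_le_mul' h2 (lintegral_heatKernelDt_le hr)) ?_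
          rw [← ENNReal.ofReal_mul (by positivity)]
          refine ENNReal.ofReal_le_ofReal (le_of_eq ?_)
          have h3 : (t - u) ^ (γ - 1) = (t - u) ^ γ / (t - u) := by
            rw [Real.rpow_sub hr, Real.rpow_one]
          rw [h3]; ring
        calc ∫⁻ u in Set.Ioc s t,
              (∫⁻ η, (‖(xc t - xc u) * heatKernelDt n (t - u) η‖₊ : ℝ≥0∞))
            = ∫⁻ u in Set.Ioo s t,
              (∫⁻ η, (‖(xc t - xc u) * heatKernelDt n (t - u) η‖₊ : ℝ≥0∞)) :=
              (setLIntegral_congr (MeasureTheory.Ioo_ae_eq_Ioc (μ := volume) (a := s) (b := t))).symm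
          _ ≤ ∫⁻ u in Set.Ioo s t, ENNReal.ofReal (Cx * heatB n * (t - u) ^ (γ - 1)) :=
              setLIntegral_mono' measurableSet_Ioo per_u
          _ ≤ ∫⁻ u in Set.Ioc s t, ENNReal.ofReal (Cx * heatB n * (t - u) ^ (γ - 1)) :=
              lintegral_mono_set Set.Ioo_subset_Ioc_self
          _ ≤ ENNReal.ofReal (Cx * heatB n * ((t - s) ^ γ / γ)) :=
              lintegral_ofReal_rpow_Ioc hlt hγ0 hγ1 (by positivity)
      have hKtfin : ∫⁻ η, Kt η ≠ ∞ := ne_of_lt (hKt_bound.trans_lt ENNReal.ofReal_lt_top)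
      have hk2_le : ∫⁻ η, (‖k2 η‖₊ : ℝ≥0∞) ≤ ∫⁻ η, Kt η :=
        lintegral_mono fun η => enorm_integral_le_lintegral_enorm _
      have hk2fin : ∫⁻ η, (‖k2 η‖₊ : ℝ≥0∞) ≠ ∞ :=
        ne_of_lt (lt_of_le_of_lt hk2_le (lt_top_iff_ne_top.2 hKtfin))
      have hB : eLpNorm (convol k2 φ') q volume
          ≤ ENNReal.ofReal (Cx * heatB n * ((t - s) ^ γ / γ)) * eLpNorm φ' q volume :=
        le_trans (eLpNorm_convol_le hp hk2m hφ'm hk2fin)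
          (mul_le_mul_left (hk2_le.trans hKt_bound) _)
      set M : EuclideanSpace ℝ (Fin n) → ℝ≥0∞ :=
        fun ξ => ∫⁻ η, Kt η * (‖φ' (ξ - η)‖₊ : ℝ≥0∞) with hM
      have hMmeas : Measurable M := by
        have h1 : Measurable fun w : EuclideanSpace ℝ (Fin n) × EuclideanSpace ℝ (Fin n) =>
            Kt w.2 * (‖φ' (w.1 - w.2)‖₊ : ℝ≥0∞) :=
          (hKtm.comp measurable_snd).mul ((hφ'm.comp (measurable_fst.sub measurable_snd)).enorm)
        exact h1.lintegral_prod_right'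
      have hφp_fin : ∫⁻ ξ, (‖φ' ξ‖₊ : ℝ≥0∞) ^ p ≠ ∞ := by
        have h5 : (∫⁻ ξ, (‖φ' ξ‖₊ : ℝ≥0∞) ^ p) = (eLpNorm φ' q volume) ^ p := by
          rw [eLpNorm_eq_lintegral_rpow_enorm_toReal hq0 hqt, ENNReal.toReal_ofReal (le_of_lt hp0),
            ← ENNReal.rpow_mul, one_div, inv_mul_cancel₀ (ne_of_gt hp0), ENNReal.rpow_one]
          rfl
        rw [h5]
        exact ENNReal.rpow_ne_top_of_nonneg (le_of_lt hp0) hφfin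
      have hMfin : ∀ᵐ ξ ∂(volume : Measure (EuclideanSpace ℝ (Fin n))), M ξ < ⊤ := by
        have hyoung := young_core hp hKtm hφ'm.enorm hKtfin
        have h6 : ∫⁻ ξ, M ξ ^ p ≠ ∞ := by
          refine ne_of_lt (lt_of_le_of_lt hyoung ?_)
          exact ENNReal.mul_lt_top
            (lt_top_iff_ne_top.2 (ENNReal.rpow_ne_top_of_nonneg (le_of_lt hp0) hKtfin))
            (lt_top_iff_ne_top.2 hφp_fin)
        have h7 := ae_lt_top (hMmeas.pow_const p) h6
        filter_upwards [h7] with ξ hξ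
        exact (ENNReal.rpow_lt_top_iff_of_pos hp0).1 hξ
      have hae : (fun ξ => ∫ u in s..t, (x t - x u) * convol (heatKernelDt n (t - u)) φ ξ)
          =ᵐ[(volume : Measure (EuclideanSpace ℝ (Fin n)))] fun ξ => convol k2 φ' ξ := by
        filter_upwards [hMfin] with ξ hMξ
        rw [intervalIntegral.integral_of_le (le_of_lt hlt)]
        have congr1 : Set.EqOn
            (fun u => (x t - x u) * convol (heatKernelDt n (t - u)) φ ξ)
            (fun u => (xc t - xc u) * convol (heatKernelDt n (t - u)) φ' ξ) (Set.Ioc s t) := by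
          intro u hu
          simp only
          rw [hconv_phi, hxcx t (hs.trans hst) htT,
            hxcx u (hs.trans (le_of_lt hu.1)) (hu.2.trans htT)]
        rw [setIntegral_congr_fun measurableSet_Ioc congr1]
        have hFm : Measurable fun w : ℝ × EuclideanSpace ℝ (Fin n) =>
            (xc t - xc w.1) * heatKernelDt n (t - w.1) w.2 * φ' (ξ - w.2) :=
          ((measurable_const.sub (hxc_meas.comp measurable_fst)).mul
            (measurable_heatKernelDt2.comp
              ((measurable_const.sub measurable_fst).prodMk measurable_snd))).mul
            (hφ'm.comp (measurable_const.sub measurable_snd))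
        have hfin2 : (∫⁻ w, (‖(xc t - xc w.1) * heatKernelDt n (t - w.1) w.2
              * φ' (ξ - w.2)‖₊ : ℝ≥0∞) ∂(ν.prod volume)) = M ξ := by
          rw [lintegral_prod _ hFm.nnnorm.coe_nnreal_ennreal.aemeasurable]
          rw [lintegral_lintegral_swap (by
            exact (((hD2.comp measurable_swap).mul
              (hφ'm.comp (measurable_const.sub measurable_snd))).enorm).aemeasurable)]
          refine lintegral_congr fun η => ?_
          rw [hKt]
          simp_rw [nnnorm_mul, ENNReal.coe_mul]
          have hmeas2 : Measurable fun u : ℝ =>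
              (‖xc t - xc u‖₊ : ℝ≥0∞) * (‖heatKernelDt n (t - u) η‖₊ : ℝ≥0∞) :=
            ((measurable_const.sub hxc_meas).enorm).mul
              ((measurable_heatKernelDt2.comp
                ((measurable_const.sub measurable_id).prodMk measurable_const)).enorm)
          exact lintegral_mul_const _ hmeas2
        have hint : Integrable (Function.uncurry fun (u : ℝ) (η : EuclideanSpace ℝ (Fin n)) =>
            (xc t - xc u) * heatKernelDt n (t - u) η * φ' (ξ - η)) (ν.prod volume) := by
          refine ⟨hFm.aestronglyMeasurable, ?_⟩
          show (∫⁻ w : ℝ × EuclideanSpace ℝ (Fin n),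
            (‖(xc t - xc w.1) * heatKernelDt n (t - w.1) w.2 * φ' (ξ - w.2)‖₊ : ℝ≥0∞)
              ∂(ν.prod volume)) < ⊤
          rw [hfin2]
          exact hMξ
        have swap2 := integral_integral_swap hint
        rw [← hν]
        calc ∫ u, (xc t - xc u) * convol (heatKernelDt n (t - u)) φ' ξ ∂ν
            = ∫ u, ∫ η, (xc t - xc u) * heatKernelDt n (t - u) η * φ' (ξ - η) ∂volume ∂ν := by
              refine integral_congr_ae (Filter.Eventually.of_forall fun u => ?_)
              simp only [convol]
              rw [← integral_const_mul]
              exact integral_congr_ae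
                (Filter.Eventually.of_forall fun η => (mul_assoc _ _ _).symm)
          _ = ∫ η, ∫ u, (xc t - xc u) * heatKernelDt n (t - u) η * φ' (ξ - η) ∂ν ∂volume :=
              swap2
          _ = ∫ η, k2 η * φ' (ξ - η) ∂volume := by
              refine integral_congr_ae (Filter.Eventually.of_forall fun η => ?_)
              rw [hk2]
              simp only
              rw [integral_mul_const]
          _ = convol k2 φ' ξ := rfl
      have hfull : (fun ξ => (x t - x s) * heatS n (t - s) φ ξ
            - ∫ u in s..t, (x t - x u) * convol (heatKernelDt n (t - u)) φ ξ)
          =ᵐ[(volume : Measure (EuclideanSpace ℝ (Fin n)))]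
            fun ξ => (xc t - xc s) * convol (heatKernel n (t - s)) φ' ξ - convol k2 φ' ξ := by
        filter_upwards [hae] with ξ hξ
        rw [hξ]
        congr 1
        simp only [heatS, if_pos hts]
        rw [hconv_phi, hxcx t (hs.trans hst) htT, hxcx s hs (hst.trans htT)]
      rw [eLpNorm_congr_ae hfull, hφnorm]
      have hA : eLpNorm (fun ξ => (xc t - xc s) * convol (heatKernel n (t - s)) φ' ξ) q volume
          ≤ ENNReal.ofReal (Cx * (t - s) ^ γ) * eLpNorm φ' q volume := by
        have h1 : (fun ξ => (xc t - xc s) * convol (heatKernel n (t - s)) φ' ξ)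
            = (xc t - xc s) • convol (heatKernel n (t - s)) φ' := rfl
        rw [h1, eLpNorm_const_smul]
        have h2 : (‖xc t - xc s‖₊ : ℝ≥0∞) ≤ ENNReal.ofReal (Cx * (t - s) ^ γ) := by
          rw [← Real.nnnorm_abs, ← enorm_eq_nnnorm, Real.enorm_eq_ofReal (abs_nonneg _)]
          refine ENNReal.ofReal_le_ofReal ((hxc_bd t s).trans (le_of_eq ?_))
          rw [abs_of_pos hts]
        have h3 := eLpNorm_convol_le hp (measurable_heatKernel (t - s)) hφ'm
          (by rw [lintegral_heatKernel_s9 hts]; exact ENNReal.one_ne_top)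
        rw [lintegral_heatKernel_s9 hts, one_mul] at h3
        exact mul_le_mul' h2 h3
      refine le_trans (eLpNorm_sub_le
        ((measurable_const.mul
          (stronglyMeasurable_convol (measurable_heatKernel (t - s)) hφ'm).measurable).aestronglyMeasurable)
        ((stronglyMeasurable_convol hk2m hφ'm).measurable.aestronglyMeasurable) hq1) ?_
      refine le_trans (add_le_add hA hB) ?_
      rw [← add_mul, ← ENNReal.ofReal_add (by positivity) (by positivity)]
      refine mul_le_mul_left (ENNReal.ofReal_le_ofReal (le_of_eq ?_)) _
      field_simp
end
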